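/- Let G=(V,E) be a finite simple graph. Then COR(G) = TRA(G) if and only if G is acyclic, i.e., a forest. -/

import Mathlib

noncomputable section

/-- The extremal point of the correlation polytope associated to a 0/1 assignment. -/
def corPoint {V : Type} (G : SimpleGraph V) (f : V → Bool) :
    (V → ℝ) × (G.edgeSet → ℝ) :=
  (fun i => if f i then 1 else 0,
   fun e => Sym2.lift ⟨fun i j => (if f i then (1 : ℝ) else 0) * (if f j then 1 else 0),
     fun _ _ => mul_comm _ _⟩ e.1)

/-- The correlation polytope `COR(G)` of a graph `G`. -/
def cor {V : Type} (G : SimpleGraph V) : Set ((V → ℝ) × (G.edgeSet → ℝ)) :=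
  convexHull ℝ (Set.range (corPoint G))

/-- The transportation body `TRA(G)` of a graph `G`. -/
def tra {V : Type} (G : SimpleGraph V) : Set ((V → ℝ) × (G.edgeSet → ℝ)) :=
  {pq | (∀ i : V, 0 ≤ pq.1 i ∧ pq.1 i ≤ 1) ∧
    ∀ (e : G.edgeSet) (i j : V), (e : Sym2 V) = s(i, j) →
      max 0 (pq.1 i + pq.1 j - 1) ≤ pq.2 e ∧ pq.2 e ≤ min (pq.1 i) (pq.1 j)}


namespace CorTra
set_option maxHeartbeats 1000000
variable {V : Type} [Fintype V] [DecidableEq V] {G : SimpleGraph V}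

def ind (b : Bool) : ℝ := if b then 1 else 0

lemma corPoint_fst (f : V → Bool) (i : V) : (corPoint G f).1 i = if f i then 1 else 0 := rfl

lemma corPoint_snd (f : V → Bool) (e : G.edgeSet) {i j : V} (h : (e : Sym2 V) = s(i, j)) :
    (corPoint G f).2 e = (if f i then (1:ℝ) else 0) * (if f j then 1 else 0) := by
  show Sym2.lift _ (e : Sym2 V) = _
  rw [h, Sym2.lift_mk]

lemma corPoint_injective : Function.Injective (corPoint G) := by
  intro f g h
  funext i
  have := congrArg (fun x => x.1 i) h
  simp only [corPoint_fst] at this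
  cases hf : f i <;> cases hg : g i <;> simp [hf, hg] at this ⊢ <;> norm_num at this

lemma corPoint_mem_tra (f : V → Bool) : corPoint G f ∈ tra G := by
  constructor
  · intro i
    rw [corPoint_fst]
    split <;> norm_num
  · intro e i j h
    rw [corPoint_snd f e h, corPoint_fst, corPoint_fst]
    cases f i <;> cases f j <;> norm_num

lemma convex_tra : Convex ℝ (tra G) := by
  intro x hx y hy a b ha hb hab
  have key : ∀ (k : V), (a • x + b • y).1 k = a * x.1 k + b * y.1 k := by
    intro k; simp [Prod.fst_add, Prod.smul_fst]
  have key2 : ∀ (e : G.edgeSet), (a • x + b • y).2 e = a * x.2 e + b * y.2 e := by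
    intro e; simp [Prod.snd_add, Prod.smul_snd]
  constructor
  · intro i
    have h1 := hx.1 i; have h2 := hy.1 i
    rw [key]
    constructor
    · nlinarith [h1.1, h2.1]
    · nlinarith [h1.2, h2.2]
  · intro e i j h
    obtain ⟨h1l, h1r⟩ := hx.2 e i j h
    obtain ⟨h2l, h2r⟩ := hy.2 e i j h
    have hxl := le_min_iff.mp h1r
    have hyl := le_min_iff.mp h2r
    have hx0 := max_le_iff.mp h1l
    have hy0 := max_le_iff.mp h2l
    rw [key, key, key2]
    constructor
    · apply max_le
      · nlinarith [hx0.1, hy0.1]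
      · nlinarith [hx0.2, hy0.2]
    · apply le_min
      · nlinarith [hxl.1, hyl.1]
      · nlinarith [hxl.2, hyl.2]

lemma cor_subset_tra : cor G ⊆ tra G :=
  convexHull_min (by rintro x ⟨f, rfl⟩; exact corPoint_mem_tra f) convex_tra

lemma mem_cor_iff {x : (V → ℝ) × (G.edgeSet → ℝ)} :
    x ∈ cor G ↔ ∃ w : (V → Bool) → ℝ,
      (∀ f, 0 ≤ w f) ∧ (∑ f, w f) = 1 ∧ (∑ f, w f • corPoint G f) = x := by
  classical
  constructor
  · intro hx
    have hfin : (Set.range (corPoint G)).Finite := Set.finite_range _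
    rw [cor, hfin.convexHull_eq] at hx
    obtain ⟨w, hw0, hw1, hwx⟩ := hx
    have himg : hfin.toFinset = Finset.univ.image (corPoint G) := by
      ext y
      simp [Set.Finite.mem_toFinset, Set.mem_range, Finset.mem_image]
    refine ⟨fun f => w (corPoint G f), fun f => hw0 _ ⟨f, rfl⟩, ?_, ?_⟩
    · rw [himg, Finset.sum_image (fun a _ b _ h => corPoint_injective h)] at hw1
      exact hw1
    · rw [Finset.centerMass_eq_of_sum_1 _ id hw1, himg,
        Finset.sum_image (fun a _ b _ h => corPoint_injective h)] at hwx
      simpa using hwx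
  · rintro ⟨w, hw0, hw1, rfl⟩
    rw [cor, ← Finset.centerMass_eq_of_sum_1 _ _ hw1]
    exact Finset.centerMass_mem_convexHull _ (fun f _ => hw0 f) (by rw [hw1]; norm_num)
      (fun f _ => ⟨f, rfl⟩)
open scoped Classical in
/-- The "disagreement" value of an edge: `p i + p j - 2 q e`. -/
def Zfun (G : SimpleGraph V) (pq : (V → ℝ) × (G.edgeSet → ℝ)) (e : Sym2 V) : ℝ :=
  Sym2.lift ⟨fun i j => pq.1 i + pq.1 j, fun _ _ => add_comm _ _⟩ e -
    2 * (if h : e ∈ G.edgeSet then pq.2 ⟨e, h⟩ else 0)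

lemma Zfun_mk (pq : (V → ℝ) × (G.edgeSet → ℝ)) {i j : V} (h : s(i,j) ∈ G.edgeSet) :
    Zfun G pq s(i,j) = pq.1 i + pq.1 j - 2 * pq.2 ⟨s(i,j), h⟩ := by
  rw [Zfun, Sym2.lift_mk, dif_pos h]

lemma Zfun_comb (x y : (V → ℝ) × (G.edgeSet → ℝ)) (a b : ℝ) (e : Sym2 V) :
    Zfun G (a • x + b • y) e = a * Zfun G x e + b * Zfun G y e := by
  induction e using Sym2.inductionOn with
  | hf i j =>
    rw [Zfun, Zfun, Zfun, Sym2.lift_mk, Sym2.lift_mk, Sym2.lift_mk]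
    have h1 : ∀ k, (a • x + b • y).1 k = a * x.1 k + b * y.1 k := by
      intro k; simp
    by_cases h : s(i,j) ∈ G.edgeSet
    · rw [dif_pos h, dif_pos h, dif_pos h]
      have h2 : (a • x + b • y).2 ⟨s(i,j), h⟩ = a * x.2 ⟨s(i,j),h⟩ + b * y.2 ⟨s(i,j),h⟩ := by simp
      simp only [Subtype.coe_mk, h1, h2]
      ring
    · rw [dif_neg h, dif_neg h, dif_neg h]
      simp only [Subtype.coe_mk, h1]
      ring

lemma Zfun_corPoint (f : V → Bool) {i j : V} (h : s(i,j) ∈ G.edgeSet) :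
    Zfun G (corPoint G f) s(i,j) = if (f i != f j) then 1 else 0 := by
  rw [Zfun_mk _ h]
  show (if f i then (1:ℝ) else 0) + (if f j then 1 else 0) -
      2 * Sym2.lift _ (s(i,j) : Sym2 V) = _
  rw [Sym2.lift_mk]
  cases hi : f i <;> cases hj : f j <;> simp [hi, hj] <;> norm_num

lemma Zfun_corPoint_nonneg (f : V → Bool) {e : Sym2 V} (h : e ∈ G.edgeSet) :
    0 ≤ Zfun G (corPoint G f) e := by
  induction e using Sym2.inductionOn with
  | hf i j => rw [Zfun_corPoint f h]; split <;> norm_num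

/-- parity indicator in `ZMod 2` -/
def tf (f : V → Bool) (e : Sym2 V) : ZMod 2 :=
  Sym2.lift ⟨fun i j => (if f i then (1 : ZMod 2) else 0) + (if f j then 1 else 0),
    fun _ _ => add_comm _ _⟩ e

lemma tf_mk (f : V → Bool) (i j : V) :
    tf f s(i,j) = if (f i != f j) then 1 else 0 := by
  rw [tf, Sym2.lift_mk]
  cases hi : f i <;> cases hj : f j <;> simp [hi, hj] <;> decide

lemma parity_sum (f : V → Bool) : ∀ {u v : V} (p : G.Walk u v),
    (p.edges.map (tf f)).sum =
      (if f u then (1 : ZMod 2) else 0) + (if f v then 1 else 0) := by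
  intro u v p
  induction p with
  | nil =>
    simp only [SimpleGraph.Walk.edges_nil, List.map_nil, List.sum_nil]
    cases h : f _ <;> simp [h] <;> decide
  | @cons u w v h p ih =>
    rw [SimpleGraph.Walk.edges_cons, List.map_cons, List.sum_cons, ih, tf_mk]
    cases hu : f u <;> cases hw : f w <;> cases hv : f v <;> simp [hu, hw, hv] <;> decide

lemma not_acyclic_ne (h : ¬ G.IsAcyclic) : cor G ≠ tra G := by
  rw [SimpleGraph.IsAcyclic] at h
  push_neg at h
  obtain ⟨v, c, hcyc⟩ := h
  have h3 := hcyc.three_le_length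
  have hne : c.edges ≠ [] := by
    intro hE
    have : c.length = 0 := by
      have := congrArg List.length hE
      simpa [SimpleGraph.Walk.length_edges] using this
    omega
  obtain ⟨e0, t, hE⟩ := List.exists_cons_of_ne_nil hne
  have hmemE : ∀ e ∈ c.edges, e ∈ G.edgeSet := fun e he => c.edges_subset_edgeSet he
  have hmem0 : e0 ∈ G.edgeSet := hmemE e0 (hE ▸ List.mem_cons_self)
  have hmemt : ∀ e ∈ t, e ∈ G.edgeSet := fun e he => hmemE e (hE ▸ List.mem_cons_of_mem _ he)
  have hnodup : e0 ∉ t := by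
    have := hcyc.edges_nodup
    rw [hE] at this
    exact (List.nodup_cons.mp this).1
  -- the linear functional
  set L : ((V → ℝ) × (G.edgeSet → ℝ)) → ℝ :=
    fun pq => Zfun G pq e0 - (t.map (Zfun G pq)).sum with hL
  have Lcomb : ∀ (x y : (V → ℝ) × (G.edgeSet → ℝ)) (a b : ℝ),
      L (a • x + b • y) = a * L x + b * L y := by
    intro x y a b
    have : ∀ l : List (Sym2 V), (l.map (Zfun G (a • x + b • y))).sum =
        a * (l.map (Zfun G x)).sum + b * (l.map (Zfun G y)).sum := by
      intro l
      induction l with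
      | nil => simp
      | cons e l ih => simp [ih, Zfun_comb]; ring
    simp only [hL, this, Zfun_comb]; ring
  have hconv : Convex ℝ {pq : (V → ℝ) × (G.edgeSet → ℝ) | L pq ≤ 0} := by
    intro x hx y hy a b ha hb hab
    simp only [Set.mem_setOf_eq] at *
    rw [Lcomb]
    nlinarith
  have hcor : ∀ x ∈ cor G, L x ≤ 0 := by
    intro x hx
    refine convexHull_min ?_ hconv hx
    rintro _ ⟨f, rfl⟩
    simp only [Set.mem_setOf_eq, hL]
    -- parity argument
    have hpar : (c.edges.map (tf f)).sum = 0 := by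
      rw [parity_sum]
      cases h : f v <;> simp [h] <;> decide
    rw [hE, List.map_cons, List.sum_cons] at hpar
    have hnn : ∀ x ∈ t.map (Zfun G (corPoint G f)), 0 ≤ x := by
      intro x hx
      obtain ⟨e, he, rfl⟩ := List.mem_map.mp hx
      exact Zfun_corPoint_nonneg f (hmemt e he)
    induction e0 using Sym2.inductionOn with
    | hf i j =>
      rw [Zfun_corPoint f hmem0]
      by_cases hxor : (f i != f j)
      · rw [if_pos hxor]
        rw [tf_mk, if_pos hxor] at hpar
        have hex : ∃ e ∈ t, tf f e ≠ 0 := by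
          by_contra hc
          push_neg at hc
          have : (t.map (tf f)).sum = 0 := by
            apply List.sum_eq_zero
            intro x hx
            obtain ⟨e, he, rfl⟩ := List.mem_map.mp hx
            exact hc e he
          rw [this] at hpar
          exact absurd hpar (by decide)
        obtain ⟨e, het, hetf⟩ := hex
        have h1 : Zfun G (corPoint G f) e = 1 := by
          induction e using Sym2.inductionOn with
          | hf a b =>
            rw [tf_mk] at hetf
            rw [Zfun_corPoint f (hmemt _ het)]
            by_cases hab : (f a != f b)
            · rw [if_pos hab]
            · rw [if_neg hab] at hetf
              exact absurd rfl hetf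
        have : (1:ℝ) ≤ (t.map (Zfun G (corPoint G f))).sum := by
          calc (1:ℝ) = Zfun G (corPoint G f) e := h1.symm
            _ ≤ _ := List.single_le_sum hnn _ (List.mem_map_of_mem het)
        linarith
      · rw [if_neg hxor]
        have : 0 ≤ (t.map (Zfun G (corPoint G f))).sum := List.sum_nonneg hnn
        linarith
  -- the witness point
  set pt : (V → ℝ) × (G.edgeSet → ℝ) :=
    (fun _ => 1/2, fun e => if (e : Sym2 V) ∈ t then 1/2 else 0) with hpt
  have hpt_tra : pt ∈ tra G := by
    constructor
    · intro i; norm_num [hpt]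
    · intro e i j h
      simp only [hpt]
      constructor
      · apply max_le <;> [skip; norm_num] <;> split <;> norm_num
      · apply le_min <;> split <;> norm_num
  have hLpt : L pt = 1 := by
    have hz0 : Zfun G pt e0 = 1 := by
      induction e0 using Sym2.inductionOn with
      | hf i j =>
        rw [Zfun_mk _ hmem0]
        simp only [hpt]
        rw [if_neg (by exact hnodup)]
        norm_num
    have hzt : ∀ e ∈ t, Zfun G pt e = 0 := by
      intro e he
      induction e using Sym2.inductionOn with
      | hf i j =>
        rw [Zfun_mk _ (hmemt _ he)]
        simp only [hpt]
        rw [if_pos (by exact he)]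
        norm_num
    have : (t.map (Zfun G pt)).sum = 0 := by
      apply List.sum_eq_zero
      intro x hx
      obtain ⟨e, he, rfl⟩ := List.mem_map.mp hx
      exact hzt e he
    simp only [hL]
    rw [this, hz0]; ring
  intro heq
  have : pt ∈ cor G := heq ▸ hpt_tra
  have := hcor pt this
  rw [hLpt] at this
  norm_num at this
/-- glue a function on `{j // j ≠ v}` with a value at `v`. -/
def glue (v : V) (h : {j // j ≠ v} → Bool) (b : Bool) : V → Bool :=
  fun j => if hj : j = v then b else h ⟨j, hj⟩

lemma glue_self (v : V) (h : {j // j ≠ v} → Bool) (b : Bool) : glue v h b v = b := dif_pos rfl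

lemma glue_ne (v : V) (h : {j // j ≠ v} → Bool) (b : Bool) {j : V} (hj : j ≠ v) :
    glue v h b j = h ⟨j, hj⟩ := dif_neg hj

lemma sum_split {M : Type*} [AddCommMonoid M] (v : V) (F : (V → Bool) → M) :
    ∑ g : V → Bool, F g =
      ∑ h : {j // j ≠ v} → Bool, (F (glue v h false) + F (glue v h true)) := by
  classical
  have he : ∀ (b : Bool) (h : {j // j ≠ v} → Bool),
      (Equiv.funSplitAt v Bool).symm (b, h) = glue v h b := by
    intro b h
    funext j
    by_cases hj : j = v
    · subst hj
      simp [Equiv.funSplitAt, Equiv.piSplitAt, glue_self]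
    · simp [Equiv.funSplitAt, Equiv.piSplitAt, glue_ne v h b hj, hj, glue]
  rw [← Equiv.sum_comp (Equiv.funSplitAt v Bool).symm F, Fintype.sum_prod_type, Fintype.sum_bool]
  rw [← Finset.sum_add_distrib]
  congr 1
  funext h
  rw [he, he, add_comm]

lemma prod_meas_sum (μ : V → Bool → ℝ) :
    ∑ g : V → Bool, ∏ i, μ i (g i) = ∏ i, (μ i false + μ i true) := by
  rw [← Fintype.prod_sum]
  congr 1
  funext i
  rw [Fintype.sum_bool, add_comm]
lemma path_first_edge {u t x : V} {w : G.Walk u t} (hw : w.IsPath)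
    (hx : s(u, x) ∈ w.edges) :
    ∃ (h : G.Adj u x) (w' : G.Walk x t), w = SimpleGraph.Walk.cons h w' := by
  cases w with
  | nil => simp at hx
  | @cons _ c _ h' p =>
    rw [SimpleGraph.Walk.edges_cons, List.mem_cons] at hx
    cases hx with
    | inl heq =>
      rcases Sym2.eq_iff.mp heq with ⟨-, rfl⟩ | ⟨huc, rfl⟩
      · exact ⟨h', p, rfl⟩
      · exact absurd huc h'.ne
    | inr hmem =>
      have h1 : u ∈ p.support := SimpleGraph.Walk.fst_mem_support_of_mem_edges p hmem
      have h2 : u ∉ p.support := ((SimpleGraph.Walk.cons_isPath_iff _ _).mp hw).2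
      contradiction

lemma exists_leaf (hG : G.IsAcyclic) {a b : V} (hab : G.Adj a b) :
    ∃ u v, G.Adj u v ∧ ∀ x, G.Adj v x → x = u := by
  classical
  set P : ℕ → Prop := fun n => ∃ (s t : V) (w : G.Walk s t), w.IsPath ∧ w.length = n with hP
  have hP1 : P 1 := ⟨a, b, SimpleGraph.Walk.cons hab SimpleGraph.Walk.nil,
    (SimpleGraph.Path.singleton hab).2, rfl⟩
  have hcard : 1 ≤ Fintype.card V := Fintype.card_pos_iff.mpr ⟨a⟩
  set N := Nat.findGreatest P (Fintype.card V) with hN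
  have hN1 : 1 ≤ N := Nat.le_findGreatest hcard hP1
  have hPN : P N := Nat.findGreatest_spec hcard hP1
  obtain ⟨s, t, w, hw, hwlen⟩ := hPN
  cases w with
  | nil => simp at hwlen; omega
  | @cons _ c _ hsc p =>
    refine ⟨c, s, hsc.symm, ?_⟩
    intro x hx
    by_cases hxs : x ∈ (SimpleGraph.Walk.cons hsc p).support
    · -- cycle case
      by_contra hxc
      set q := (SimpleGraph.Walk.cons hsc p).takeUntil x hxs with hq
      have hqpath : q.IsPath := hw.takeUntil hxs
      have hncyc := hG (SimpleGraph.Walk.cons hx.symm q)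
      rw [SimpleGraph.Walk.cons_isCycle_iff] at hncyc
      push_neg at hncyc
      have hedge : s(x, s) ∈ q.edges := hncyc hqpath
      rw [Sym2.eq_swap] at hedge
      obtain ⟨hadj, q₂, hq2⟩ := path_first_edge hqpath hedge
      have hspec := (SimpleGraph.Walk.cons hsc p).take_spec hxs
      rw [← hq, hq2, SimpleGraph.Walk.cons_append] at hspec
      have h1 := congrArg SimpleGraph.Walk.support hspec
      rw [SimpleGraph.Walk.support_cons, SimpleGraph.Walk.support_cons,
        SimpleGraph.Walk.support_eq_cons (q₂.append _), SimpleGraph.Walk.support_eq_cons p] at h1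
      simp only [List.cons.injEq] at h1
      exact hxc h1.2.1
    · -- extension case
      exfalso
      have hw2 : (SimpleGraph.Walk.cons hx.symm (SimpleGraph.Walk.cons hsc p)).IsPath :=
        (SimpleGraph.Walk.cons_isPath_iff _ _).mpr ⟨hw, hxs⟩
      have hlt := hw2.length_lt
      rw [SimpleGraph.Walk.length_cons, hwlen] at hlt
      have := Nat.findGreatest_is_greatest (show N < N + 1 by omega) (by omega)
      exact this ⟨x, t, _, hw2, by rw [SimpleGraph.Walk.length_cons, hwlen]⟩
lemma sym2_rep (z : Sym2 V) : ∃ i j, z = s(i, j) :=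
  z.inductionOn fun i j => ⟨i, j, rfl⟩
lemma glue_update (v : V) (h : {j // j ≠ v} → Bool) (b c : Bool) :
    Function.update (glue v h b) v c = glue v h c := by
  funext j
  by_cases hj : j = v
  · subst hj; rw [Function.update_self, glue_self]
  · rw [Function.update_of_ne hj, glue_ne v h b hj, glue_ne v h c hj]

lemma step_leaf {u v : V} (huv : G.Adj u v)
    (hleaf : ∀ x, G.Adj v x → x = u)
    {p : V → ℝ} {q : G.edgeSet → ℝ} (htra : (p, q) ∈ tra G)
    (w' : (V → Bool) → ℝ)
    (h0 : ∀ f, 0 ≤ w' f) (h1 : (∑ f, w' f) = 1)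
    (hm : ∀ i, i ≠ v → (∑ f, w' f * ind (f i)) = p i)
    (he : ∀ (e : G.edgeSet) (i j : V), i ≠ v → j ≠ v → (e : Sym2 V) = s(i, j) →
      (∑ f, w' f * (ind (f i) * ind (f j))) = q e) :
    ∃ w : (V → Bool) → ℝ, (∀ f, 0 ≤ w f) ∧ (∑ f, w f) = 1 ∧
      (∀ i, (∑ f, w f * ind (f i)) = p i) ∧
      (∀ (e : G.edgeSet) (i j : V), (e : Sym2 V) = s(i, j) →
        (∑ f, w f * (ind (f i) * ind (f j))) = q e) := by
  classical
  have hune : u ≠ v := huv.ne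
  have hedge : s(u, v) ∈ G.edgeSet := huv
  set u' : {j // j ≠ v} := ⟨u, hune⟩ with hu'
  have hpu := htra.1 u
  have hpv := htra.1 v
  have hqe := htra.2 ⟨s(u,v), hedge⟩ u v rfl
  set qe := q ⟨s(u,v), hedge⟩ with hqedef
  have hqe0 : 0 ≤ qe := le_trans (le_max_left _ _) hqe.1
  have hqeu : qe ≤ p u := le_trans hqe.2 (min_le_left _ _)
  have hqev : qe ≤ p v := le_trans hqe.2 (min_le_right _ _)
  have hqe1 : p u + p v - 1 ≤ qe := le_trans (le_max_right _ _) hqe.1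
  set α := if p u = 0 then 0 else qe / p u with hα
  set β := if p u = 1 then 0 else (p v - qe) / (1 - p u) with hβ
  have hα0 : 0 ≤ α := by
    rw [hα]; split
    · exact le_refl 0
    · exact div_nonneg hqe0 hpu.1
  have hα1 : α ≤ 1 := by
    rw [hα]; split
    · norm_num
    · rename_i hne
      have hpos : 0 < p u := lt_of_le_of_ne hpu.1 (Ne.symm hne)
      exact (div_le_one hpos).mpr hqeu
  have hβ0 : 0 ≤ β := by
    rw [hβ]; split
    · exact le_refl 0
    · rename_i hne
      have hpos : 0 < 1 - p u := by
        have := lt_of_le_of_ne hpu.2 hne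
        linarith
      exact div_nonneg (by linarith) (le_of_lt hpos)
  have hβ1 : β ≤ 1 := by
    rw [hβ]; split
    · norm_num
    · rename_i hne
      have hpos : 0 < 1 - p u := by
        have := lt_of_le_of_ne hpu.2 hne
        linarith
      exact (div_le_one hpos).mpr (by linarith)
  have hκu : p u * α = qe := by
    rw [hα]; split
    · rename_i h; rw [h]; ring_nf; linarith [hqeu, hqe0, h ▸ hqeu]
    · rename_i h; rw [mul_comm, div_mul_cancel₀ _ h]
  have hκv : (1 - p u) * β = p v - qe := by
    rw [hβ]; split
    · rename_i h; rw [h]; ring_nf; nlinarith [hqe1, hqev, h]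
    · rename_i h
      have h1pu : (1:ℝ) - p u ≠ 0 := sub_ne_zero.mpr (Ne.symm h)
      rw [mul_comm, div_mul_cancel₀ _ h1pu]
  set κ : Bool → Bool → ℝ := fun a b =>
    if a then (if b then α else 1 - α) else (if b then β else 1 - β) with hκ
  have hκ0 : ∀ a b, 0 ≤ κ a b := by
    intro a b; cases a <;> cases b <;> simp [hκ] <;> linarith
  have hκsum : ∀ a, κ a false + κ a true = 1 := by
    intro a; cases a <;> simp [hκ]
  set m : ({j // j ≠ v} → Bool) → ℝ :=
    fun h => w' (glue v h false) + w' (glue v h true) with hmdef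
  set w : (V → Bool) → ℝ :=
    fun g => (w' (Function.update g v false) + w' (Function.update g v true)) * κ (g u) (g v)
    with hwdef
  have hwglue : ∀ (h : {j // j ≠ v} → Bool) (b : Bool),
      w (glue v h b) = m h * κ (h u') b := by
    intro h b
    rw [hwdef]
    simp only [glue_update, glue_self, glue_ne v h b hune, hmdef, hu']
  -- transferred facts about m
  have Fm1 : ∑ h, m h = 1 := (sum_split v w').symm.trans h1
  have Fmi : ∀ (i : V) (hi : i ≠ v), (∑ h, m h * ind (h ⟨i, hi⟩)) = p i := by
    intro i hi
    calc ∑ h, m h * ind (h ⟨i, hi⟩)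
        = ∑ h : {j // j ≠ v} → Bool,
            (w' (glue v h false) * ind (glue v h false i) +
             w' (glue v h true) * ind (glue v h true i)) := by
          apply Finset.sum_congr rfl
          intro h _
          simp only [glue_ne v h false hi, glue_ne v h true hi, hmdef]
          ring
      _ = ∑ g : V → Bool, w' g * ind (g i) :=
          (sum_split v (fun g => w' g * ind (g i))).symm
      _ = p i := hm i hi
  have Fme : ∀ (e : G.edgeSet) (i j : V) (hi : i ≠ v) (hj : j ≠ v), (e : Sym2 V) = s(i, j) →
      (∑ h, m h * (ind (h ⟨i, hi⟩) * ind (h ⟨j, hj⟩))) = q e := by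
    intro e i j hi hj hrep
    calc ∑ h, m h * (ind (h ⟨i, hi⟩) * ind (h ⟨j, hj⟩))
        = ∑ h : {k // k ≠ v} → Bool,
            (w' (glue v h false) * (ind (glue v h false i) * ind (glue v h false j)) +
             w' (glue v h true) * (ind (glue v h true i) * ind (glue v h true j))) := by
          apply Finset.sum_congr rfl
          intro h _
          simp only [glue_ne v h false hi, glue_ne v h true hi,
            glue_ne v h false hj, glue_ne v h true hj, hmdef]
          ring
      _ = ∑ g : V → Bool, w' g * (ind (g i) * ind (g j)) :=
          (sum_split v (fun g => w' g * (ind (g i) * ind (g j)))).symm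
      _ = q e := he e i j hi hj hrep
  refine ⟨w, ?_, ?_, ?_, ?_⟩
  · intro g
    exact mul_nonneg (add_nonneg (h0 _) (h0 _)) (hκ0 _ _)
  · rw [sum_split v w]
    calc ∑ h : {j // j ≠ v} → Bool, (w (glue v h false) + w (glue v h true))
        = ∑ h : {j // j ≠ v} → Bool, m h * (κ (h u') false + κ (h u') true) := by
          apply Finset.sum_congr rfl
          intro h _
          rw [hwglue, hwglue]; ring
      _ = ∑ h, m h := by
          apply Finset.sum_congr rfl
          intro h _
          rw [hκsum, mul_one]
      _ = 1 := Fm1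
  · intro i
    by_cases hi : i = v
    · subst hi
      rw [sum_split i (fun g => w g * ind (g i))]
      have key : ∀ h : {j // j ≠ i} → Bool,
          w (glue i h false) * ind (glue i h false i) + w (glue i h true) * ind (glue i h true i)
            = α * (m h * ind (h u')) + β * (m h - m h * ind (h u')) := by
        intro h
        rw [hwglue, hwglue, glue_self, glue_self]
        cases hh : h u' <;> simp [hκ, hh, ind] <;> ring
      rw [Finset.sum_congr rfl (fun h _ => key h)]
      rw [Finset.sum_add_distrib, ← Finset.mul_sum, ← Finset.mul_sum,
        Finset.sum_sub_distrib, Fm1, Fmi u hune]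
      linear_combination hκu + hκv
    · rw [sum_split v (fun g => w g * ind (g i))]
      have key : ∀ h : {j // j ≠ v} → Bool,
          w (glue v h false) * ind (glue v h false i) + w (glue v h true) * ind (glue v h true i)
            = m h * ind (h ⟨i, hi⟩) := by
        intro h
        rw [hwglue, hwglue, glue_ne v h false hi, glue_ne v h true hi]
        linear_combination (m h * ind (h ⟨i, hi⟩)) * hκsum (h u')
      rw [Finset.sum_congr rfl (fun h _ => key h)]
      exact Fmi i hi
  · intro e i j hrep
    by_cases hcase : (e : Sym2 V) = s(u, v)
    · have hqeq : q e = qe := by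
        rw [hqedef]
        congr 1
        exact Subtype.ext hcase
      have hij : ∀ g : V → Bool, ind (g i) * ind (g j) = ind (g u) * ind (g v) := by
        have hs : s(i, j) = s(u, v) := hrep.symm.trans hcase
        rcases Sym2.eq_iff.mp hs with ⟨rfl, rfl⟩ | ⟨rfl, rfl⟩
        · intro g; rfl
        · intro g; ring
      have : (∑ f, w f * (ind (f i) * ind (f j))) = ∑ f, w f * (ind (f u) * ind (f v)) := by
        apply Finset.sum_congr rfl
        intro f _
        rw [hij f]
      rw [this, hqeq]
      rw [sum_split v (fun g => w g * (ind (g u) * ind (g v)))]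
      have key : ∀ h : {j // j ≠ v} → Bool,
          w (glue v h false) * (ind (glue v h false u) * ind (glue v h false v)) +
          w (glue v h true) * (ind (glue v h true u) * ind (glue v h true v))
            = α * (m h * ind (h u')) := by
        intro h
        rw [hwglue, hwglue, glue_self, glue_self, glue_ne v h false hune, glue_ne v h true hune]
        cases hh : h u' <;> simp [hκ, hh, ind] <;> ring
      rw [Finset.sum_congr rfl (fun h _ => key h), ← Finset.mul_sum, Fmi u hune]
      linear_combination hκu
    · have hiv : i ≠ v := by
        rintro rfl
        have hadj : G.Adj i j := by
          rw [← SimpleGraph.mem_edgeSet, ← hrep]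
          exact e.2
        have := hleaf j hadj
        subst this
        exact hcase (hrep.trans (Sym2.eq_swap))
      have hjv : j ≠ v := by
        rintro rfl
        have hadj : G.Adj i j := by
          rw [← SimpleGraph.mem_edgeSet, ← hrep]
          exact e.2
        have := hleaf i hadj.symm
        subst this
        exact hcase hrep
      rw [sum_split v (fun g => w g * (ind (g i) * ind (g j)))]
      have key : ∀ h : {k // k ≠ v} → Bool,
          w (glue v h false) * (ind (glue v h false i) * ind (glue v h false j)) +
          w (glue v h true) * (ind (glue v h true i) * ind (glue v h true j))
            = m h * (ind (h ⟨i, hiv⟩) * ind (h ⟨j, hjv⟩)) := by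
        intro h
        rw [hwglue, hwglue, glue_ne v h false hiv, glue_ne v h true hiv,
          glue_ne v h false hjv, glue_ne v h true hjv]
        linear_combination (m h * (ind (h ⟨i, hiv⟩) * ind (h ⟨j, hjv⟩))) * hκsum (h u')
      rw [Finset.sum_congr rfl (fun h _ => key h)]
      exact Fme e i j hiv hjv hrep
lemma main_ind : ∀ (n : ℕ) (G : SimpleGraph V), G.edgeSet.ncard = n → G.IsAcyclic →
    ∀ (p : V → ℝ) (q : G.edgeSet → ℝ), (p, q) ∈ tra G →
    ∃ w : (V → Bool) → ℝ, (∀ f, 0 ≤ w f) ∧ (∑ f, w f) = 1 ∧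
      (∀ i, (∑ f, w f * ind (f i)) = p i) ∧
      (∀ (e : G.edgeSet) (i j : V), (e : Sym2 V) = s(i, j) →
        (∑ f, w f * (ind (f i) * ind (f j))) = q e) := by
  intro n
  induction n using Nat.strong_induction_on with
  | _ n IH =>
    intro G hcard hacyc p q htra
    rcases Nat.eq_zero_or_pos n with rfl | hpos
    · -- base case: no edges
      have hE : G.edgeSet = ∅ := (Set.ncard_eq_zero (Set.toFinite _)).mp hcard
      set μ : V → Bool → ℝ := fun i b => if b then p i else 1 - p i with hμ
      refine ⟨fun f => ∏ i, μ i (f i), ?_, ?_, ?_, ?_⟩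
      · intro f
        apply Finset.prod_nonneg
        intro i _
        have := htra.1 i
        rw [hμ]
        dsimp only
        split
        · exact this.1
        · have := htra.1 i
          simp only [Prod.fst] at this
          linarith [this.2]
      · rw [prod_meas_sum μ]
        rw [show (fun i => μ i false + μ i true) = fun _ => (1:ℝ) from ?_]
        · exact Finset.prod_const_one
        · funext i
          rw [hμ]
          norm_num
      · intro i
        set μ' : V → Bool → ℝ := fun j b => if j = i then (if b then p i else 0) else μ j b
          with hμ'
        have key : ∀ f : V → Bool, (∏ j, μ j (f j)) * ind (f i) = ∏ j, μ' j (f j) := by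
          intro f
          rw [Finset.prod_eq_mul_prod_sdiff_singleton_of_mem (Finset.mem_univ i) (fun j => μ j (f j)),
            Finset.prod_eq_mul_prod_sdiff_singleton_of_mem (Finset.mem_univ i) (fun j => μ' j (f j))]
          have h2 : ∏ j ∈ Finset.univ \ {i}, μ' j (f j) = ∏ j ∈ Finset.univ \ {i}, μ j (f j) := by
            apply Finset.prod_congr rfl
            intro j hj
            have : j ≠ i := by
              intro hji
              rw [Finset.mem_sdiff, Finset.mem_singleton] at hj
              exact hj.2 hji
            rw [hμ']
            dsimp only
            rw [if_neg this]
          rw [h2]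
          have h3 : μ' i (f i) = μ i (f i) * ind (f i) := by
            rw [hμ', hμ]
            dsimp only
            rw [if_pos rfl]
            cases hfi : f i <;> simp [ind, hfi]
          rw [h3]
          ring
        calc (∑ f : V → Bool, (∏ j, μ j (f j)) * ind (f i)) = ∑ f : V → Bool, ∏ j, μ' j (f j) := by
              apply Finset.sum_congr rfl
              intro f _
              exact key f
          _ = ∏ j, (μ' j false + μ' j true) := prod_meas_sum μ'
          _ = p i := by
              rw [Finset.prod_eq_mul_prod_sdiff_singleton_of_mem (Finset.mem_univ i)
                (fun j => μ' j false + μ' j true)]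
              have h4 : ∏ j ∈ Finset.univ \ {i}, (μ' j false + μ' j true) = 1 := by
                apply Finset.prod_eq_one
                intro j hj
                have hji : j ≠ i := by
                  rw [Finset.mem_sdiff, Finset.mem_singleton] at hj
                  exact hj.2
                rw [hμ']
                dsimp only
                rw [if_neg hji, if_neg hji, hμ]
                dsimp only
                norm_num
              rw [h4, mul_one, hμ']
              dsimp only
              rw [if_pos rfl, if_pos rfl]
              norm_num
      · intro e
        exact absurd e.2 (Set.eq_empty_iff_forall_notMem.mp hE _)
    · -- inductive step
      have hne : G.edgeSet.Nonempty := Set.nonempty_of_ncard_ne_zero (by omega)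
      obtain ⟨e₀, he₀⟩ := hne
      obtain ⟨a, b, hab⟩ := sym2_rep e₀
      have hadj : G.Adj a b := by rwa [← SimpleGraph.mem_edgeSet, ← hab]
      obtain ⟨u, v, huv, hleaf⟩ := exists_leaf hacyc hadj
      set G' := G.deleteEdges {s(u, v)} with hG'
      have hG'E : G'.edgeSet = G.edgeSet \ {s(u, v)} := SimpleGraph.edgeSet_deleteEdges _
      have hG'mem : ∀ z : Sym2 V, z ∈ G'.edgeSet ↔ z ∈ G.edgeSet ∧ z ≠ s(u, v) := by
        intro z
        rw [hG'E]
        exact Set.mem_diff z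
      have hlt : G'.edgeSet.ncard < n := by
        have h5 : G'.edgeSet.ncard < G.edgeSet.ncard := by
          apply Set.ncard_lt_ncard _ (Set.toFinite _)
          rw [hG'E]
          exact Set.sdiff_singleton_ssubset.mpr huv
        omega
      have hacyc' : G'.IsAcyclic := by
        intro x c hc
        exact hacyc (c.mapLe (SimpleGraph.deleteEdges_le _)) (hc.mapLe _)
      set q' : G'.edgeSet → ℝ := fun e => q ⟨e.1, ((hG'mem e.1).mp e.2).1⟩ with hq'
      have htra' : (p, q') ∈ tra G' := by
        refine ⟨htra.1, ?_⟩
        intro e i j hrep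
        exact htra.2 ⟨e.1, ((hG'mem e.1).mp e.2).1⟩ i j hrep
      obtain ⟨w', hw0, hw1, hwm, hwe⟩ := IH _ hlt G' rfl hacyc' p q' htra'
      apply step_leaf huv hleaf htra w' hw0 hw1 (fun i _ => hwm i)
      intro e i j hi hj hrep
      have hne' : (e : Sym2 V) ≠ s(u, v) := by
        intro hh
        rcases Sym2.eq_iff.mp (hrep.symm.trans hh) with ⟨rfl, rfl⟩ | ⟨rfl, rfl⟩
        · exact hj rfl
        · exact hi rfl
      have hmem : (e : Sym2 V) ∈ G'.edgeSet := (hG'mem _).mpr ⟨e.2, hne'⟩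
      have := hwe ⟨(e : Sym2 V), hmem⟩ i j hrep
      rw [this]

lemma tra_subset_cor (hacyc : G.IsAcyclic) : tra G ⊆ cor G := by
  rintro ⟨p, q⟩ htra
  obtain ⟨w, h0, h1, hmarg, hedge⟩ := main_ind (G.edgeSet.ncard) G rfl hacyc p q htra
  rw [mem_cor_iff]
  refine ⟨w, h0, h1, ?_⟩
  have hfst : (∑ f, w f • corPoint G f).1 = p := by
    funext i
    have h2 : (∑ f, w f • corPoint G f).1 i = ∑ f, w f * ind (f i) := by
      rw [Prod.fst_sum, Finset.sum_apply]
      apply Finset.sum_congr rfl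
      intro f _
      show (w f • corPoint G f).1 i = _
      rw [Prod.smul_fst, Pi.smul_apply, corPoint_fst, smul_eq_mul]
      rfl
    rw [h2, hmarg i]
  have hsnd : (∑ f, w f • corPoint G f).2 = q := by
    funext e
    obtain ⟨i, j, hrep⟩ := sym2_rep (e : Sym2 V)
    have h2 : (∑ f, w f • corPoint G f).2 e = ∑ f, w f * (ind (f i) * ind (f j)) := by
      rw [Prod.snd_sum, Finset.sum_apply]
      apply Finset.sum_congr rfl
      intro f _
      show (w f • corPoint G f).2 e = _
      rw [Prod.smul_snd, Pi.smul_apply, corPoint_snd f e hrep, smul_eq_mul]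
      rfl
    rw [h2, hedge e i j hrep]
  exact Prod.ext hfst hsnd

end CorTra

/-- `COR(G) = TRA(G)` if and only if `G` is acyclic (a forest). -/
theorem stmt3 {V : Type} [Fintype V] [DecidableEq V] (G : SimpleGraph V) :
    cor G = tra G ↔ G.IsAcyclic := by
  constructor
  · intro h
    by_contra hac
    exact CorTra.not_acyclic_ne hac h
  · intro hac
    exact Set.Subset.antisymm CorTra.cor_subset_tra (CorTra.tra_subset_cor hac)
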